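/- For every β̂ ∈ [0,1) and every x, the third derivative of ξ(x) = atanh(β̂ · tanh x) satisfies ξ'''(x) ≥ −2β̂/(1−β̂²). -/

import Mathlib

/-- The inverse hyperbolic tangent. -/
noncomputable def artanh (x : ℝ) : ℝ := Real.log ((1 + x) / (1 - x)) / 2

lemma tanh_sq_lt_one' (y : ℝ) : Real.tanh y ^ 2 < 1 := by
  have hc := Real.cosh_pos y
  have hs := Real.sinh_sq y
  have h1 : Real.tanh y ^ 2 = Real.sinh y ^ 2 / Real.cosh y ^ 2 := by
    rw [Real.tanh_eq_sinh_div_cosh, div_pow]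
  rw [h1, div_lt_one (by positivity)]
  nlinarith

lemma hasDerivAt_tanh' (y : ℝ) :
    HasDerivAt Real.tanh (1 - Real.tanh y ^ 2) y := by
  have hc := Real.cosh_pos y
  have h := (Real.hasDerivAt_sinh y).div (Real.hasDerivAt_cosh y) hc.ne'
  have hfun : (fun x => Real.sinh x / Real.cosh x) = Real.tanh := by
    funext x; rw [Real.tanh_eq_sinh_div_cosh]
  rw [show (Real.sinh / Real.cosh) = fun x => Real.sinh x / Real.cosh x from rfl, hfun] at h
  refine h.congr_deriv ?_
  rw [Real.tanh_eq_sinh_div_cosh, div_pow]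
  have h2 := Real.cosh_sq_sub_sinh_sq y
  field_simp

lemma hasDerivAt_artanh' {u : ℝ} (h1 : -1 < u) (h2 : u < 1) :
    HasDerivAt artanh (1 / (1 - u ^ 2)) u := by
  have hp : (0:ℝ) < 1 + u := by linarith
  have hm : (0:ℝ) < 1 - u := by linarith
  have hlog1 : HasDerivAt (fun x : ℝ => Real.log (1 + x)) (1 + u)⁻¹ u := by
    have := (Real.hasDerivAt_log hp.ne').comp u ((hasDerivAt_id u).const_add 1)
    simpa [Function.comp_def] using this
  have hlog2 : HasDerivAt (fun x : ℝ => Real.log (1 - x)) (-(1 - u)⁻¹) u := by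
    have hin : HasDerivAt (fun x : ℝ => 1 - x) (-1) u := by
      simpa using (hasDerivAt_id u).const_sub 1
    have := (Real.hasDerivAt_log hm.ne').comp u hin
    simpa [Function.comp_def] using this
  have H : HasDerivAt (fun x : ℝ => (Real.log (1 + x) - Real.log (1 - x)) / 2)
      (((1 + u)⁻¹ - -(1 - u)⁻¹) / 2) u := (hlog1.sub hlog2).div_const 2
  have hev : artanh =ᶠ[nhds u] fun x : ℝ => (Real.log (1 + x) - Real.log (1 - x)) / 2 := by
    filter_upwards [Ioo_mem_nhds h1 h2] with z hz
    have hz1 : (0:ℝ) < 1 + z := by linarith [hz.1]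
    have hz2 : (0:ℝ) < 1 - z := by linarith [hz.2]
    unfold artanh
    rw [Real.log_div hz1.ne' hz2.ne']
  have H2 := H.congr_of_eventuallyEq hev
  have hsq : (1:ℝ) - u ^ 2 ≠ 0 := by nlinarith
  refine H2.congr_deriv ?_
  field_simp
  ring

lemma key_poly (a s : ℝ) (ha0 : 0 ≤ a) (ha1 : a ≤ 1) (hs0 : 0 ≤ s) (hs1 : s ≤ 1) :
    (1-a)^2*(1-s)*(1-3*(1-a)*s-a*s^2) ≤ (1-a*s)^3 := by
  have hu : (0:ℝ) ≤ 1-a := by linarith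
  have hv : (0:ℝ) ≤ 1-s := by linarith
  nlinarith [mul_nonneg (mul_nonneg ha0 hs0) hu, mul_nonneg (mul_nonneg ha0 hs0) hv,
    mul_nonneg (mul_nonneg ha0 hu) hv, mul_nonneg (mul_nonneg hs0 hu) hv,
    mul_nonneg (mul_nonneg ha0 hs0) hs0, mul_nonneg (mul_nonneg ha0 ha0) hs0,
    mul_nonneg (mul_nonneg hu hu) hu, mul_nonneg (mul_nonneg hv hv) hv,
    mul_nonneg (mul_nonneg hu hu) hv, mul_nonneg (mul_nonneg hu hv) hv,
    mul_nonneg (mul_nonneg ha0 hv) hv, mul_nonneg (mul_nonneg hs0 hu) hu,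
    mul_nonneg (mul_nonneg ha0 ha0) hu, mul_nonneg (mul_nonneg hs0 hs0) hv]

/-- For every `β̂ ∈ [0,1)` and every `x`, the third derivative of
`ξ(x) = atanh (β̂ * tanh x)` satisfies `ξ'''(x) ≥ -2β̂/(1-β̂²)`. -/
theorem third_deriv_xi_lower (b : ℝ) (hb0 : 0 ≤ b) (hb1 : b < 1) (x : ℝ) :
    -(2 * b) / (1 - b ^ 2) ≤ iteratedDeriv 3 (fun y => artanh (b * Real.tanh y)) x := by
  have hb2 : b ^ 2 < 1 := by nlinarith
  -- denominator nonvanishing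
  have hden : ∀ y : ℝ, 0 < 1 - b ^ 2 * Real.tanh y ^ 2 := by
    intro y
    nlinarith [tanh_sq_lt_one' y, sq_nonneg (Real.tanh y), sq_nonneg b]
  set f1 : ℝ → ℝ := fun y => b * (1 - Real.tanh y ^ 2) / (1 - b ^ 2 * Real.tanh y ^ 2) with hf1
  set f2 : ℝ → ℝ := fun y => (-(2*b*(1-b^2))) * (Real.tanh y - Real.tanh y ^ 3) /
      (1 - b ^ 2 * Real.tanh y ^ 2) ^ 2 with hf2
  have ht2 : ∀ y : ℝ, HasDerivAt (fun y => Real.tanh y ^ 2)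
      (2 * Real.tanh y * (1 - Real.tanh y ^ 2)) y := by
    intro y
    simpa using (hasDerivAt_tanh' y).fun_pow 2
  have ht3 : ∀ y : ℝ, HasDerivAt (fun y => Real.tanh y ^ 3)
      (3 * Real.tanh y ^ 2 * (1 - Real.tanh y ^ 2)) y := by
    intro y
    simpa [mul_comm] using (hasDerivAt_tanh' y).fun_pow 3
  have hD0 : ∀ y : ℝ, HasDerivAt (fun y => artanh (b * Real.tanh y)) (f1 y) y := by
    intro y
    have hbt : (b * Real.tanh y) ^ 2 < 1 := by
      nlinarith [tanh_sq_lt_one' y, sq_nonneg (Real.tanh y), sq_nonneg b]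
    have h1 : -1 < b * Real.tanh y := by nlinarith [sq_nonneg (b * Real.tanh y + 1)]
    have h2 : b * Real.tanh y < 1 := by nlinarith [sq_nonneg (b * Real.tanh y - 1)]
    have hin : HasDerivAt (fun y => b * Real.tanh y) (b * (1 - Real.tanh y ^ 2)) y :=
      (hasDerivAt_tanh' y).const_mul b
    have := (hasDerivAt_artanh' h1 h2).comp y hin
    refine this.congr_deriv ?_
    have hd := hden y
    have hne : (1 : ℝ) - b ^ 2 * Real.tanh y ^ 2 ≠ 0 := hd.ne'
    have hne2 : (1 : ℝ) - (b * Real.tanh y) ^ 2 ≠ 0 := by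
      rw [mul_pow]; exact hne
    simp only [hf1, mul_pow]
    ring
  have hD1 : ∀ y : ℝ, HasDerivAt f1 (f2 y) y := by
    intro y
    have hne : (1 : ℝ) - b ^ 2 * Real.tanh y ^ 2 ≠ 0 := (hden y).ne'
    have hnum : HasDerivAt (fun y => b * (1 - Real.tanh y ^ 2))
        (b * (-(2 * Real.tanh y * (1 - Real.tanh y ^ 2)))) y := by
      have := ((ht2 y).const_sub 1).const_mul b
      convert this using 1
    have hdenD : HasDerivAt (fun y => 1 - b ^ 2 * Real.tanh y ^ 2)
        (-(b ^ 2 * (2 * Real.tanh y * (1 - Real.tanh y ^ 2)))) y :=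
      ((ht2 y).const_mul (b ^ 2)).const_sub 1
    have := hnum.div hdenD hne
    refine this.congr_deriv ?_
    simp only [hf2]
    field_simp
    ring
  have hD2 : HasDerivAt f2 ((-(2*b*(1-b^2))) *
      ((1 - Real.tanh x ^ 2) * (1 - 3*(1-b^2)*Real.tanh x ^ 2 - b^2*Real.tanh x ^ 4)) /
      (1 - b ^ 2 * Real.tanh x ^ 2) ^ 3) x := by
    have hne : (1 : ℝ) - b ^ 2 * Real.tanh x ^ 2 ≠ 0 := (hden x).ne'
    have hne2 : ((1 : ℝ) - b ^ 2 * Real.tanh x ^ 2) ^ 2 ≠ 0 := pow_ne_zero 2 hne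
    have hnum : HasDerivAt (fun y => (-(2*b*(1-b^2))) * (Real.tanh y - Real.tanh y ^ 3))
        ((-(2*b*(1-b^2))) * ((1 - Real.tanh x ^ 2) - 3 * Real.tanh x ^ 2 * (1 - Real.tanh x ^ 2))) x :=
      ((hasDerivAt_tanh' x).sub (ht3 x)).const_mul _
    have hdenD : HasDerivAt (fun y => (1 - b ^ 2 * Real.tanh y ^ 2) ^ 2)
        ((2 : ℕ) * (1 - b ^ 2 * Real.tanh x ^ 2) ^ 1 *
          (-(b ^ 2 * (2 * Real.tanh x * (1 - Real.tanh x ^ 2))))) x :=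
      (((ht2 x).const_mul (b ^ 2)).const_sub 1).pow 2
    have := hnum.div hdenD hne2
    refine this.congr_deriv ?_
    field_simp
    ring
  have e1 : deriv (fun y => artanh (b * Real.tanh y)) = f1 := funext fun y => (hD0 y).deriv
  have e2 : deriv f1 = f2 := funext fun y => (hD1 y).deriv
  have e3 := hD2.deriv
  rw [show (3:ℕ) = 2 + 1 from rfl, iteratedDeriv_succ, show (2:ℕ) = 1 + 1 from rfl,
    iteratedDeriv_succ, iteratedDeriv_one, e1, e2, e3, show (1:ℕ) + 1 = 2 from rfl]
  -- the inequality
  set t := Real.tanh x with htdef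
  have ht1 : t ^ 2 < 1 := tanh_sq_lt_one' x
  have hd : 0 < 1 - b ^ 2 * t ^ 2 := hden x
  have hb2' : 0 < 1 - b ^ 2 := by linarith
  rw [div_le_div_iff₀ hb2' (by positivity)]
  have aux := key_poly (b ^ 2) (t ^ 2) (sq_nonneg b) hb2.le (sq_nonneg t) ht1.le
  have h2b : (0:ℝ) ≤ 2 * b := by linarith
  nlinarith [mul_le_mul_of_nonneg_left aux h2b]
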